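/- Consider the temporal election E with 12 voters N = {1,…,12}, 6 rounds, and candidates {x, y, z, c_1, …, c_12}, where in round 1 voters 1–4 each approve exactly {x}, voters 5–8 each approve exactly {y}, voters 9–12 each approve exactly {z}, and in each of rounds 2 through 6 each voter i approves exactly {c_i}. Then no outcome for E provides strong justified representation (sJR). (In particular, there exists a temporal election in which every voter approves exactly one candidate per round and no outcome provides sJR.) -/

import Mathlib

open Finset

/-- Satisfaction of the voter group `S` over the rounds in `R` under the
(sub)outcome `o`: the number of rounds `r ∈ R` in which the selected
candidate `o r` is approved by at least one voter in `S`. -/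
def satR {C : Type*} [DecidableEq C] {n ℓ : ℕ} (A : Fin n → Fin ℓ → Finset C)
    (S : Finset (Fin n)) (R : Finset (Fin ℓ)) (o : Fin ℓ → C) : ℕ :=
  (R.filter fun r => o r ∈ S.biUnion fun i => A i r).card

/-- Strong justified representation. -/
def providesSJR {C : Type*} [DecidableEq C] {n ℓ : ℕ}
    (A : Fin n → Fin ℓ → Finset C) (o : Fin ℓ → C) : Prop :=
  ∀ t : ℕ, 0 < t → ∀ S : Finset (Fin n),
    (∃ R : Finset (Fin ℓ), R.card = t ∧ ∀ r ∈ R, ∃ c : C, ∀ i ∈ S, c ∈ A i r) →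
    min 1 (ℓ * S.card / n) ≤ satR A S univ o


/-- The election of Proposition 3.3: 12 voters, 6 rounds, candidates
`x = 0, y = 1, z = 2, c_i = 2 + i` (as elements of `Fin 15`).  In round 1
(index `0`) voters 1–4 approve exactly `{x}`, voters 5–8 exactly `{y}`,
voters 9–12 exactly `{z}`; in rounds 2–6 voter `i` approves exactly `{c_i}`. -/
def A₃ : Fin 12 → Fin 6 → Finset (Fin 15) := fun i r =>
  if r.val = 0 then {⟨i.val / 4, by have := i.isLt; omega⟩}
  else {⟨3 + i.val, by have := i.isLt; omega⟩}

/-- No outcome for this election provides sJR. -/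
theorem no_outcome_provides_sJR : ∀ o : Fin 6 → Fin 15, ¬ providesSJR A₃ o := by
  intro o h
  classical
  set T : Finset (Fin 12) :=
    univ.filter (fun i => ∃ r : Fin 6, r.val ≠ 0 ∧ (o r).val = 3 + i.val) with hT
  have hTcard : T.card ≤ 5 := by
    have hsub : T ⊆ (({0}ᶜ : Finset (Fin 6)).image fun r =>
        if hr : 3 ≤ (o r).val then (⟨(o r).val - 3, by have := (o r).isLt; omega⟩ : Fin 12)
        else 0) := by
      intro i hi
      simp only [hT, mem_filter] at hi
      obtain ⟨-, r, hr0, hrv⟩ := hi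
      refine mem_image.mpr ⟨r, ?_, ?_⟩
      · rw [Finset.mem_compl, Finset.mem_singleton]; intro h0; subst h0; exact hr0 rfl
      · have h3 : 3 ≤ (o r).val := by omega
        rw [dif_pos h3]
        exact Fin.ext (by simp; omega)
    calc T.card ≤ _ := Finset.card_le_card hsub
      _ ≤ ({0}ᶜ : Finset (Fin 6)).card := Finset.card_image_le
      _ = 5 := by decide
  have pair : ∀ i j : Fin 12, i ≠ j → i.val / 4 = j.val / 4 →
      (o 0).val ≠ i.val / 4 → i ∈ T ∨ j ∈ T := by
    intro i j hij hgr ho0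
    have hagree : ∃ R : Finset (Fin 6), R.card = 1 ∧
        ∀ r ∈ R, ∃ c : Fin 15, ∀ k ∈ ({i, j} : Finset (Fin 12)), c ∈ A₃ k r := by
      refine ⟨{0}, rfl, ?_⟩
      intro r hr
      rw [Finset.mem_singleton] at hr
      subst hr
      refine ⟨⟨i.val / 4, by have := i.isLt; omega⟩, ?_⟩
      intro k hk
      rcases Finset.mem_insert.mp hk with hk | hk
      · subst hk; simp [A₃]
      · rw [Finset.mem_singleton] at hk; subst hk
        simp only [A₃, Fin.val_zero, if_pos, Finset.mem_singleton]
        exact Fin.ext (by simp [hgr])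
    have hcard2 : ({i, j} : Finset (Fin 12)).card = 2 := by
      rw [Finset.card_insert_of_notMem (by simpa using hij), Finset.card_singleton]
    have hsat := h 1 one_pos {i, j} hagree
    rw [hcard2] at hsat
    norm_num at hsat
    have hne : (univ.filter fun r =>
        o r ∈ ({i, j} : Finset (Fin 12)).biUnion fun k => A₃ k r).Nonempty := by
      rw [← Finset.card_pos]; exact hsat
    obtain ⟨r, hr⟩ := hne
    rw [Finset.mem_filter, Finset.mem_biUnion] at hr
    obtain ⟨-, k, hk, hok⟩ := hr
    by_cases hr0 : r.val = 0
    · exfalso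
      have hre : r = 0 := Fin.ext hr0
      subst hre
      simp only [A₃, Fin.val_zero, if_pos, Finset.mem_singleton] at hok
      rcases Finset.mem_insert.mp hk with hk | hk
      · subst hk; exact ho0 (by rw [hok])
      · rw [Finset.mem_singleton] at hk; subst hk
        exact ho0 (by rw [hok]; simp [← hgr])
    · simp only [A₃, if_neg hr0, Finset.mem_singleton] at hok
      have hok' : (o r).val = 3 + k.val := by rw [hok]
      rcases Finset.mem_insert.mp hk with hk | hk
      · left; subst hk
        simp only [hT, mem_filter, mem_univ, true_and]
        exact ⟨r, hr0, hok'⟩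
      · right; rw [Finset.mem_singleton] at hk; subst hk
        simp only [hT, mem_filter, mem_univ, true_and]
        exact ⟨r, hr0, hok'⟩
  -- groups
  have group : ∀ g : ℕ, g < 3 → (o 0).val ≠ g →
      3 ≤ ((univ.filter fun i : Fin 12 => i.val / 4 = g) ∩ T).card := by
    intro g hg3 hog
    set G := univ.filter fun i : Fin 12 => i.val / 4 = g with hG
    have hGcard : G.card = 4 := by
      have : G = {⟨4*g, by omega⟩, ⟨4*g+1, by omega⟩, ⟨4*g+2, by omega⟩, ⟨4*g+3, by omega⟩} := by
        ext i
        simp only [hG, mem_filter, mem_univ, true_and, Finset.mem_insert, Finset.mem_singleton,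
          Fin.ext_iff]
        omega
      rw [this]
      rw [Finset.card_insert_of_notMem (by simp [Fin.ext_iff]),
        Finset.card_insert_of_notMem (by simp [Fin.ext_iff]),
        Finset.card_insert_of_notMem (by simp [Fin.ext_iff]),
        Finset.card_singleton]
    have hsdiff : (G \ T).card ≤ 1 := by
      by_contra hlt
      push_neg at hlt
      obtain ⟨i, hi, j, hj, hij⟩ := Finset.one_lt_card.mp hlt
      rw [Finset.mem_sdiff] at hi hj
      have higr : i.val / 4 = g := (mem_filter.mp hi.1).2
      have hjgr : j.val / 4 = g := (mem_filter.mp hj.1).2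
      rcases pair i j hij (by rw [higr, hjgr]) (by rw [higr]; exact hog) with hc | hc
      · exact hi.2 hc
      · exact hj.2 hc
    have := Finset.card_inter_add_card_sdiff G T
    omega
  -- at least two of the groups 0,1,2 avoid (o 0).val
  have key : ∀ g1 g2 : ℕ, g1 < 3 → g2 < 3 → g1 ≠ g2 → (o 0).val ≠ g1 → (o 0).val ≠ g2 → False := by
    intro g1 g2 h1 h2 hne ho1 ho2
    have hc1 := group g1 h1 ho1
    have hc2 := group g2 h2 ho2
    have hdisj : Disjoint ((univ.filter fun i : Fin 12 => i.val / 4 = g1) ∩ T)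
        ((univ.filter fun i : Fin 12 => i.val / 4 = g2) ∩ T) := by
      rw [Finset.disjoint_left]
      intro a ha hb
      rw [Finset.mem_inter, mem_filter] at ha hb
      exact hne (ha.1.2 ▸ hb.1.2)
    have hsub : ((univ.filter fun i : Fin 12 => i.val / 4 = g1) ∩ T) ∪
        ((univ.filter fun i : Fin 12 => i.val / 4 = g2) ∩ T) ⊆ T := by
      intro a ha
      rcases Finset.mem_union.mp ha with ha | ha <;> exact (Finset.mem_inter.mp ha).2
    have := Finset.card_le_card hsub
    rw [Finset.card_union_of_disjoint hdisj] at this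
    omega
  by_cases h0 : (o 0).val = 0
  · refine key 1 2 ?_ ?_ ?_ ?_ ?_ <;> omega
  · by_cases h1 : (o 0).val = 1
    · refine key 0 2 ?_ ?_ ?_ ?_ ?_ <;> omega
    · refine key 0 1 ?_ ?_ ?_ ?_ ?_ <;> omega
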